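/- arXiv:math/0410468 — 4 statements merged into one kernel-verified Lean document; each statement's English description precedes it below -/
import Mathlib

section
/- For any prime p and any composition α, the Frobenius operation f_p on QSymm satisfies f_p(M_α) ≡ (M_α)^p modulo p, where f_p is the algebra endomorphism sending M_{[a_1,...,a_m]} to M_{[pa_1,...,pa_m]}. -/
/-- The monomial quasisymmetric function `M_α = ∑_{i₁<…<i_m} X_{i₁}^{a₁} ⋯ X_{i_m}^{a_m}`
as a multivariate power series in countably many variables `X_0 < X_1 < …`:
its coefficient at an exponent function `d` is `1` exactly when the list of values of `d`
on its support, taken in increasing order of the variables, equals `α`. -/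
noncomputable def Mq (α : List ℕ) : MvPowerSeries ℕ ℤ :=
  fun d => if (d.support.sort (· ≤ ·)).map (fun i => d i) = α then 1 else 0

namespace FrobQSymm

open Finset MvPowerSeries Function MulAction

open scoped Classical

/-- The "type" of an exponent: list of values on the support, in increasing variable order. -/
def typ (d : ℕ →₀ ℕ) : List ℕ := (d.support.sort (· ≤ ·)).map (fun i => d i)

lemma Mq_apply (α : List ℕ) (d : ℕ →₀ ℕ) :
    Mq α d = if typ d = α then 1 else 0 := by
  simp [Mq, typ]
  congr

variable {p : ℕ}

lemma typ_smul (hp : p ≠ 0) (e : ℕ →₀ ℕ) :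
    typ (p • e) = (typ e).map (fun a => p * a) := by
  unfold typ
  rw [Finsupp.support_smul_eq hp, List.map_map]
  exact List.map_congr_left (fun i _ => by simp)

lemma smul_injective (hp : p ≠ 0) :
    Function.Injective ((p • ·) : (ℕ →₀ ℕ) → (ℕ →₀ ℕ)) := by
  intro e e' h
  ext i
  have := DFunLike.congr_fun h i
  simp only [Finsupp.smul_apply, smul_eq_mul] at this
  exact Nat.eq_of_mul_eq_mul_left (Nat.pos_of_ne_zero hp) this

lemma typ_eq_map_iff (hp : p ≠ 0) (d : ℕ →₀ ℕ) (α : List ℕ) :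
    typ d = α.map (fun a => p * a) ↔ ∃ e, p • e = d ∧ typ e = α := by
  constructor
  · intro h
    have hdvd : ∀ i, p ∣ d i := by
      intro i
      by_cases hi : d i = 0
      · simp [hi]
      · have hmem : i ∈ d.support.sort (· ≤ ·) := by
          rw [Finset.mem_sort]; exact Finsupp.mem_support_iff.2 hi
        have : d i ∈ typ d := List.mem_map_of_mem hmem
        rw [h] at this
        obtain ⟨a, -, ha⟩ := List.mem_map.1 this
        exact ⟨a, ha.symm⟩
    refine ⟨d.mapRange (· / p) (by simp), ?_, ?_⟩
    · ext i
      simp only [Finsupp.smul_apply, Finsupp.mapRange_apply, smul_eq_mul]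
      exact Nat.mul_div_cancel' (hdvd i)
    · have he : p • d.mapRange (· / p) (by simp) = d := by
        ext i
        simp only [Finsupp.smul_apply, Finsupp.mapRange_apply, smul_eq_mul]
        exact Nat.mul_div_cancel' (hdvd i)
      have := typ_smul hp (d.mapRange (· / p) (by simp))
      rw [he, h] at this
      exact List.map_injective_iff.2 (mul_right_injective₀ hp) this.symm
  · rintro ⟨e, rfl, rfl⟩
    exact typ_smul hp e

section

variable (p) [NeZero p]

/-- tuples of exponents of type `α` summing to `d`, indexed by `ZMod p`. -/
def Tset (α : List ℕ) (d : ℕ →₀ ℕ) : Type :=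
  {v : ZMod p → (ℕ →₀ ℕ) // (∀ i, typ (v i) = α) ∧ ∑ i, v i = d}

/-- the corresponding finset form coming from `coeff_pow`. -/
noncomputable def Sset (α : List ℕ) (d : ℕ →₀ ℕ) : Finset (ℕ →₀ (ℕ →₀ ℕ)) :=
  (Finset.finsuppAntidiag (Finset.range p) d).filter
    (fun l => ∀ i ∈ Finset.range p, typ (l i) = α)

lemma sum_zmod {M : Type*} [AddCommMonoid M] (f : ℕ → M) :
    ∑ i : ZMod p, f (ZMod.val i) = ∑ j ∈ Finset.range p, f j := by
  apply Finset.sum_nbij' (i := fun i => ZMod.val i) (j := fun j => (j : ZMod p))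
  · intro a _; exact Finset.mem_range.2 (ZMod.val_lt a)
  · intro a _; exact Finset.mem_univ _
  · intro a _; exact ZMod.natCast_rightInverse a
  · intro a ha; exact ZMod.val_cast_of_lt (Finset.mem_range.1 ha)
  · intro a _; rfl

/-- Equivalence between the finset form and the tuple form. -/
noncomputable def sEquivT (α : List ℕ) (d : ℕ →₀ ℕ) :
    {l // l ∈ Sset p α d} ≃ Tset p α d where
  toFun l := by
    refine ⟨fun i => l.1 (ZMod.val i), ?_, ?_⟩
    · intro i
      have hl := (Finset.mem_filter.1 l.2).2
      exact hl _ (Finset.mem_range.2 (ZMod.val_lt i))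
    · have hl := (Finset.mem_finsuppAntidiag.1 (Finset.mem_filter.1 l.2).1).1
      rw [sum_zmod]
      exact hl
  invFun v := by
    refine ⟨Finsupp.onFinset (Finset.range p)
      (fun j => if h : j < p then v.1 (j : ZMod p) else 0)
      (fun j hj => by
        by_contra hc
        exact hj (dif_neg (Finset.mem_range.not.1 hc))), ?_⟩
    refine Finset.mem_filter.2 ⟨Finset.mem_finsuppAntidiag.2 ⟨?_, Finsupp.support_onFinset_subset⟩, ?_⟩
    · calc ∑ j ∈ Finset.range p, (Finsupp.onFinset (Finset.range p)
            (fun j => if h : j < p then v.1 (j : ZMod p) else 0) _) j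
          = ∑ j ∈ Finset.range p, v.1 (j : ZMod p) := by
            refine Finset.sum_congr rfl (fun j hj => ?_)
            simp only [Finsupp.onFinset_apply]
            rw [dif_pos (Finset.mem_range.1 hj)]
        _ = ∑ i : ZMod p, v.1 i := by
            rw [← sum_zmod p (fun j => v.1 (j : ZMod p))]
            exact Fintype.sum_congr _ _ (fun i => by rw [ZMod.natCast_rightInverse i])
        _ = d := v.2.2
    · intro i hi
      simp only [Finsupp.onFinset_apply]
      rw [dif_pos (Finset.mem_range.1 hi)]
      exact v.2.1 _
  left_inv l := by
    apply Subtype.ext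
    ext j
    simp only [Finsupp.onFinset_apply]
    by_cases hj : j < p
    · rw [dif_pos hj, ZMod.val_cast_of_lt hj]
    · rw [dif_neg hj]
      have hsupp := (Finset.mem_finsuppAntidiag.1 (Finset.mem_filter.1 l.2).1).2
      by_cases hmem : j ∈ l.1.support
      · exact absurd (Finset.mem_range.1 (hsupp hmem)) hj
      · rw [Finsupp.notMem_support_iff.1 hmem]
  right_inv v := by
    apply Subtype.ext
    funext i
    simp only [Finsupp.onFinset_apply]
    rw [dif_pos (ZMod.val_lt i), ZMod.natCast_rightInverse i]

instance (α : List ℕ) (d : ℕ →₀ ℕ) : Finite (Tset p α d) :=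
  Finite.of_equiv _ (sEquivT p α d)

instance (α : List ℕ) (d : ℕ →₀ ℕ) :
    SMul (Multiplicative (ZMod p)) (Tset p α d) where
  smul k v := ⟨fun i => v.1 (i + Multiplicative.toAdd k),
    fun i => v.2.1 _,
    (Equiv.sum_comp (Equiv.addRight (Multiplicative.toAdd k)) v.1).trans v.2.2⟩

instance (α : List ℕ) (d : ℕ →₀ ℕ) :
    MulAction (Multiplicative (ZMod p)) (Tset p α d) where
  one_smul v := by
    apply Subtype.ext
    funext i
    show v.1 (i + 0) = v.1 i
    rw [add_zero]
  mul_smul k k' v := by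
    apply Subtype.ext
    funext i
    show v.1 (i + (Multiplicative.toAdd k + Multiplicative.toAdd k')) =
      v.1 (i + Multiplicative.toAdd k + Multiplicative.toAdd k')
    rw [add_assoc]

end

section Prime

variable (p : ℕ)

lemma isPGroup (hp : p.Prime) : IsPGroup p (Multiplicative (ZMod p)) := by
  haveI : NeZero p := ⟨hp.ne_zero⟩
  apply IsPGroup.of_card (n := 1)
  rw [pow_one, Nat.card_congr Multiplicative.toAdd, Nat.card_eq_fintype_card]
  exact ZMod.card p

/-- fixed points of the rotation action correspond to `p`-divisible exponents of type `α`. -/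
noncomputable def fixedEquiv (α : List ℕ) (d : ℕ →₀ ℕ) [NeZero p] :
    fixedPoints (Multiplicative (ZMod p)) (Tset p α d) ≃
      {e : ℕ →₀ ℕ // p • e = d ∧ typ e = α} where
  toFun v := by
    refine ⟨v.1.1 0, ?_, v.1.2.1 0⟩
    have hconst : ∀ i : ZMod p, v.1.1 i = v.1.1 0 := by
      intro i
      have h0 : v.1.1 (0 + Multiplicative.toAdd (Multiplicative.ofAdd i)) = v.1.1 0 :=
        congr_fun (congr_arg Subtype.val ((mem_fixedPoints.1 v.2) (Multiplicative.ofAdd i))) 0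
      rw [toAdd_ofAdd, zero_add] at h0
      exact h0
    have := v.1.2.2
    rw [Finset.sum_congr rfl (fun i _ => hconst i)] at this
    rw [Finset.sum_const, Finset.card_univ, ZMod.card] at this
    exact this
  invFun e := ⟨⟨fun _ => e.1, fun _ => e.2.2, by
      rw [Finset.sum_const, Finset.card_univ, ZMod.card]; exact e.2.1⟩,
    fun k => Subtype.ext rfl⟩
  left_inv v := by
    apply Subtype.ext
    apply Subtype.ext
    funext i
    have h0 : v.1.1 (0 + Multiplicative.toAdd (Multiplicative.ofAdd i)) = v.1.1 0 :=
      congr_fun (congr_arg Subtype.val ((mem_fixedPoints.1 v.2) (Multiplicative.ofAdd i))) 0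
    rw [toAdd_ofAdd, zero_add] at h0
    exact h0.symm
  right_inv e := Subtype.ext rfl

lemma card_fixed (hp : p.Prime) (α : List ℕ) (d : ℕ →₀ ℕ) :
    Nat.card {e : ℕ →₀ ℕ // p • e = d ∧ typ e = α} =
      if typ d = α.map (fun a => p * a) then 1 else 0 := by
  split_ifs with h
  · obtain ⟨e, he, hte⟩ := (typ_eq_map_iff hp.ne_zero d α).1 h
    haveI : Unique {e : ℕ →₀ ℕ // p • e = d ∧ typ e = α} := by
      refine ⟨⟨⟨e, he, hte⟩⟩, ?_⟩
      rintro ⟨e', he', -⟩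
      exact Subtype.ext (smul_injective hp.ne_zero (he'.trans he.symm))
    exact Nat.card_unique
  · haveI : IsEmpty {e : ℕ →₀ ℕ // p • e = d ∧ typ e = α} := by
      refine ⟨fun e => h ?_⟩
      exact (typ_eq_map_iff hp.ne_zero d α).2 ⟨e.1, e.2.1, e.2.2⟩
    exact Nat.card_of_isEmpty

lemma coeff_pow_eq (α : List ℕ) (d : ℕ →₀ ℕ) [NeZero p] :
    MvPowerSeries.coeff d ((Mq α) ^ p) = (Nat.card (Tset p α d) : ℤ) := by
  rw [MvPowerSeries.coeff_pow]
  have h1 : ∀ l ∈ Finset.finsuppAntidiag (Finset.range p) d,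
      ∏ i ∈ Finset.range p, MvPowerSeries.coeff (l i) (Mq α) =
        if ∀ i ∈ Finset.range p, typ (l i) = α then 1 else 0 := by
    intro l _
    rw [← Finset.prod_boole]
    exact Finset.prod_congr rfl (fun i _ => by rw [MvPowerSeries.coeff_apply, Mq_apply])
  rw [Finset.sum_congr rfl h1, Finset.sum_boole, ← Sset]
  rw [Nat.card_congr (sEquivT p α d).symm, Nat.card_eq_fintype_card, Fintype.card_coe]

theorem coeff_dvd (hp : p.Prime) (α : List ℕ) (d : ℕ →₀ ℕ) :
    (p : ℤ) ∣ MvPowerSeries.coeff d (Mq (α.map (fun a => p * a)) - (Mq α) ^ p) := by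
  haveI : NeZero p := ⟨hp.ne_zero⟩
  rw [map_sub, coeff_pow_eq p α d]
  have hM : MvPowerSeries.coeff d (Mq (α.map (fun a => p * a))) =
      (Nat.card {e : ℕ →₀ ℕ // p • e = d ∧ typ e = α} : ℤ) := by
    rw [MvPowerSeries.coeff_apply, Mq_apply, card_fixed p hp α d]
    split_ifs <;> norm_num
  rw [hM]
  haveI : Fact p.Prime := ⟨hp⟩
  have hmod : Nat.card (Tset p α d) ≡
      Nat.card {e : ℕ →₀ ℕ // p • e = d ∧ typ e = α} [MOD p] := by
    have h1 := (isPGroup p hp).card_modEq_card_fixedPoints (Tset p α d)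
    rwa [Nat.card_congr (fixedEquiv p α d)] at h1
  exact hmod.dvd

end Prime

end FrobQSymm

/-- For any prime `p` and any composition `α = [a₁,…,a_m]` (a list of positive integers),
the Frobenius operation `f_p`, which sends `M_{[a₁,…,a_m]}` to `M_{[p·a₁,…,p·a_m]}`,
satisfies `f_p(M_α) ≡ (M_α)^p` modulo `p`. -/
theorem frobenius_congruence_qsymm
    (p : ℕ) (hp : p.Prime) (α : List ℕ) (hα : ∀ a ∈ α, 0 < a) :
    ∃ g : MvPowerSeries ℕ ℤ,
      Mq (α.map (fun a => p * a)) - (Mq α) ^ p = (p : MvPowerSeries ℕ ℤ) * g := by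
  set F := Mq (α.map (fun a => p * a)) - (Mq α) ^ p with hF
  have hdvd : ∀ d, (p : ℤ) ∣ MvPowerSeries.coeff d F :=
    fun d => FrobQSymm.coeff_dvd p hp α d
  refine ⟨(fun d => MvPowerSeries.coeff d F / p : MvPowerSeries ℕ ℤ), ?_⟩
  ext d
  have : (p : MvPowerSeries ℕ ℤ) = (MvPowerSeries.C (p : ℤ) : MvPowerSeries ℕ ℤ) := by
    rw [map_natCast]
  rw [this]
  erw [MvPowerSeries.coeff_C_mul]
  exact (Int.mul_ediv_cancel' (hdvd d)).symm
end

section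
/- The overlapping shuffle product on the free Z-module with basis all compositions is associative, with the empty composition as the unit element. -/
/-- The overlapping shuffle product of two compositions, defined by the recursion
`[] * β = β`, `α * [] = α`,
`(a::α') * (b::β') = a::(α' * (b::β')) + b::((a::α') * β') + (a+b)::(α' * β')`. -/
noncomputable def osh : List ℕ+ → List ℕ+ → (List ℕ+ →₀ ℤ)
  | [], β => Finsupp.single β 1
  | a :: α', [] => Finsupp.single (a :: α') 1
  | a :: α', b :: β' =>
      Finsupp.mapDomain (a :: ·) (osh α' (b :: β'))
        + Finsupp.mapDomain (b :: ·) (osh (a :: α') β')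
        + Finsupp.mapDomain ((a + b) :: ·) (osh α' β')
  termination_by α β => α.length + β.length
  decreasing_by all_goals (simp [List.length_cons]; try omega)

/-- The `ℤ`-bilinear extension of the overlapping shuffle product. -/
noncomputable def oshMul (x y : List ℕ+ →₀ ℤ) : List ℕ+ →₀ ℤ :=
  x.sum fun α c => y.sum fun β d => (c * d) • osh α β

lemma osh_nil_left (β) : osh [] β = Finsupp.single β 1 := by rw [osh]
lemma osh_nil_right (α) : osh α [] = Finsupp.single α 1 := by cases α <;> rw [osh]
lemma osh_cons_cons (a α b β) : osh (a::α) (b::β) = Finsupp.mapDomain (a :: ·) (osh α (b :: β))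
        + Finsupp.mapDomain (b :: ·) (osh (a :: α) β)
        + Finsupp.mapDomain ((a + b) :: ·) (osh α β) := by rw [osh]

lemma oshMul_zero_left (y) : oshMul 0 y = 0 := Finsupp.sum_zero_index
lemma oshMul_zero_right (x) : oshMul x 0 = 0 := by
  simp [oshMul, Finsupp.sum_zero_index]
lemma oshMul_add_left (x₁ x₂ y) : oshMul (x₁ + x₂) y = oshMul x₁ y + oshMul x₂ y := by
  unfold oshMul
  apply Finsupp.sum_add_index' <;> intros <;> simp [add_mul, add_smul, Finsupp.sum_add]
lemma oshMul_add_right (x y₁ y₂) : oshMul x (y₁ + y₂) = oshMul x y₁ + oshMul x y₂ := by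
  unfold oshMul
  rw [← Finsupp.sum_add]
  apply Finsupp.sum_congr
  intro α _
  apply Finsupp.sum_add_index' <;> intros <;> simp [mul_add, add_smul]
lemma oshMul_single_single (α β : List ℕ+) (c d : ℤ) :
    oshMul (Finsupp.single α c) (Finsupp.single β d) = (c * d) • osh α β := by
  unfold oshMul
  rw [Finsupp.sum_single_index, Finsupp.sum_single_index]
  · simp
  · simp [Finsupp.sum_single_index]

lemma oshMul_smul_left (m : ℤ) (x y) : oshMul (m • x) y = m • oshMul x y := by
  unfold oshMul
  rw [Finsupp.sum_smul_index (by intro; simp), Finsupp.smul_sum]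
  apply Finsupp.sum_congr
  intros
  simp [Finsupp.smul_sum, smul_smul, mul_assoc]

lemma oshMul_smul_right (m : ℤ) (x y) : oshMul x (m • y) = m • oshMul x y := by
  unfold oshMul
  rw [Finsupp.smul_sum]
  apply Finsupp.sum_congr
  intro α _
  rw [Finsupp.sum_smul_index (by intro; simp), Finsupp.smul_sum]
  apply Finsupp.sum_congr
  intros
  rw [smul_smul]
  ring_nf

lemma oshMul_unit_left (x : List ℕ+ →₀ ℤ) :
    oshMul (Finsupp.single ([] : List ℕ+) 1) x = x := by
  unfold oshMul
  rw [Finsupp.sum_single_index (by simp)]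
  simp only [one_mul, osh_nil_left, Finsupp.smul_single, smul_eq_mul, mul_one]
  exact Finsupp.sum_single x

lemma oshMul_unit_right (x : List ℕ+ →₀ ℤ) :
    oshMul x (Finsupp.single ([] : List ℕ+) 1) = x := by
  unfold oshMul
  have h : ∀ α c, ((Finsupp.single ([] : List ℕ+) 1).sum fun β d => (c*d) • osh α β)
      = Finsupp.single α c := by
    intro α c
    rw [Finsupp.sum_single_index (by simp)]
    simp [osh_nil_right, Finsupp.smul_single]
  rw [Finsupp.sum_congr (fun α _ => h α _)]
  exact Finsupp.sum_single x

lemma lem1 (x c : ℕ+) (γ : List ℕ+) (X : List ℕ+ →₀ ℤ) :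
    oshMul (Finsupp.mapDomain (x :: ·) X) (Finsupp.single (c::γ) 1)
      = Finsupp.mapDomain (x :: ·) (oshMul X (Finsupp.single (c::γ) 1))
      + Finsupp.mapDomain (c :: ·) (oshMul (Finsupp.mapDomain (x :: ·) X) (Finsupp.single γ 1))
      + Finsupp.mapDomain ((x+c) :: ·) (oshMul X (Finsupp.single γ 1)) := by
  induction X using Finsupp.induction_linear with
  | zero => simp [oshMul_zero_left]
  | add f g hf hg =>
    simp only [Finsupp.mapDomain_add, oshMul_add_left, hf, hg]
    abel
  | single δ d =>
    rw [Finsupp.mapDomain_single, oshMul_single_single, oshMul_single_single,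
      oshMul_single_single, oshMul_single_single, osh_cons_cons]
    simp only [mul_one, Finsupp.mapDomain_smul, Finsupp.mapDomain_add, smul_add]

lemma lem2 (a y : ℕ+) (α : List ℕ+) (Y : List ℕ+ →₀ ℤ) :
    oshMul (Finsupp.single (a::α) 1) (Finsupp.mapDomain (y :: ·) Y)
      = Finsupp.mapDomain (a :: ·) (oshMul (Finsupp.single α 1) (Finsupp.mapDomain (y :: ·) Y))
      + Finsupp.mapDomain (y :: ·) (oshMul (Finsupp.single (a::α) 1) Y)
      + Finsupp.mapDomain ((a+y) :: ·) (oshMul (Finsupp.single α 1) Y) := by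
  induction Y using Finsupp.induction_linear with
  | zero => simp [oshMul_zero_right]
  | add f g hf hg =>
    simp only [Finsupp.mapDomain_add, oshMul_add_right, hf, hg]
    abel
  | single ε d =>
    rw [Finsupp.mapDomain_single, oshMul_single_single, oshMul_single_single,
      oshMul_single_single, oshMul_single_single, osh_cons_cons]
    simp only [one_mul, Finsupp.mapDomain_smul, Finsupp.mapDomain_add, smul_add]

lemma lhs_expand (a b c : ℕ+) (α β γ : List ℕ+) :
    oshMul (osh (a::α) (b::β)) (Finsupp.single (c::γ) 1)
    = Finsupp.mapDomain (a :: ·) (oshMul (osh α (b::β)) (Finsupp.single (c::γ) 1))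
    + Finsupp.mapDomain (b :: ·) (oshMul (osh (a::α) β) (Finsupp.single (c::γ) 1))
    + Finsupp.mapDomain ((a+b) :: ·) (oshMul (osh α β) (Finsupp.single (c::γ) 1))
    + Finsupp.mapDomain (c :: ·) (oshMul (osh (a::α) (b::β)) (Finsupp.single γ 1))
    + Finsupp.mapDomain ((a+c) :: ·) (oshMul (osh α (b::β)) (Finsupp.single γ 1))
    + Finsupp.mapDomain ((b+c) :: ·) (oshMul (osh (a::α) β) (Finsupp.single γ 1))
    + Finsupp.mapDomain ((a+b+c) :: ·) (oshMul (osh α β) (Finsupp.single γ 1)) := by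
  conv_lhs => rw [osh_cons_cons a α b β]
  conv_rhs =>
    rw [osh_cons_cons a α b β, oshMul_add_left, oshMul_add_left, Finsupp.mapDomain_add,
      Finsupp.mapDomain_add]
  rw [oshMul_add_left, oshMul_add_left, lem1, lem1, lem1]
  abel

lemma rhs_expand (a b c : ℕ+) (α β γ : List ℕ+) :
    oshMul (Finsupp.single (a::α) 1) (osh (b::β) (c::γ))
    = Finsupp.mapDomain (a :: ·) (oshMul (Finsupp.single α 1) (osh (b::β) (c::γ)))
    + Finsupp.mapDomain (b :: ·) (oshMul (Finsupp.single (a::α) 1) (osh β (c::γ)))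
    + Finsupp.mapDomain ((a+b) :: ·) (oshMul (Finsupp.single α 1) (osh β (c::γ)))
    + Finsupp.mapDomain (c :: ·) (oshMul (Finsupp.single (a::α) 1) (osh (b::β) γ))
    + Finsupp.mapDomain ((a+c) :: ·) (oshMul (Finsupp.single α 1) (osh (b::β) γ))
    + Finsupp.mapDomain ((b+c) :: ·) (oshMul (Finsupp.single (a::α) 1) (osh β γ))
    + Finsupp.mapDomain ((a+b+c) :: ·) (oshMul (Finsupp.single α 1) (osh β γ)) := by
  conv_lhs => rw [osh_cons_cons b β c γ]
  conv_rhs =>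
    rw [osh_cons_cons b β c γ, oshMul_add_right, oshMul_add_right, Finsupp.mapDomain_add,
      Finsupp.mapDomain_add]
  rw [oshMul_add_right, oshMul_add_right, lem2, lem2, lem2, add_assoc a b c]
  abel

lemma key : ∀ n (α β γ : List ℕ+), α.length + β.length + γ.length ≤ n →
    oshMul (osh α β) (Finsupp.single γ 1) = oshMul (Finsupp.single α 1) (osh β γ) := by
  intro n
  induction n with
  | zero =>
    intro α β γ h
    have hα : α = [] := List.eq_nil_of_length_eq_zero (by omega)
    have hβ : β = [] := List.eq_nil_of_length_eq_zero (by omega)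
    have hγ : γ = [] := List.eq_nil_of_length_eq_zero (by omega)
    subst hα hβ hγ
    rw [osh_nil_left]
  | succ n ih =>
    intro α β γ h
    match α, β, γ with
    | [], β, γ =>
      simp [osh_nil_left, oshMul_unit_left, oshMul_single_single]
    | a::α, [], γ =>
      rw [osh_nil_right, osh_nil_left]
    | a::α, b::β, [] =>
      simp [osh_nil_right, oshMul_unit_right, oshMul_single_single]
    | a::α, b::β, c::γ =>
      simp only [List.length_cons] at h
      rw [lhs_expand, rhs_expand,
        ih α (b::β) (c::γ) (by simp only [List.length_cons]; omega),
        ih (a::α) β (c::γ) (by simp only [List.length_cons]; omega),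
        ih α β (c::γ) (by simp only [List.length_cons]; omega),
        ih (a::α) (b::β) γ (by simp only [List.length_cons]; omega),
        ih α (b::β) γ (by simp only [List.length_cons]; omega),
        ih (a::α) β γ (by simp only [List.length_cons]; omega),
        ih α β γ (by omega)]


/-- The overlapping shuffle product on the free `ℤ`-module with basis all
compositions is associative, with the empty composition as unit element. -/
theorem oshMul_assoc_unit :
    (∀ x y w : List ℕ+ →₀ ℤ, oshMul (oshMul x y) w = oshMul x (oshMul y w)) ∧
    (∀ x : List ℕ+ →₀ ℤ,
      oshMul (Finsupp.single ([] : List ℕ+) 1) x = x ∧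
      oshMul x (Finsupp.single ([] : List ℕ+) 1) = x) := by
  constructor
  · intro x y w
    induction x using Finsupp.induction_linear with
    | zero => simp [oshMul_zero_left]
    | add f g hf hg => simp [oshMul_add_left, hf, hg]
    | single α c =>
      induction y using Finsupp.induction_linear with
      | zero => simp [oshMul_zero_left, oshMul_zero_right]
      | add f g hf hg => simp [oshMul_add_left, oshMul_add_right, hf, hg]
      | single β d =>
        induction w using Finsupp.induction_linear with
        | zero => simp [oshMul_zero_right]
        | add f g hf hg => simp [oshMul_add_right, hf, hg]
        | single γ e =>
          have h1 : (Finsupp.single γ e : List ℕ+ →₀ ℤ) = e • Finsupp.single γ 1 := by simp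
          have h2 : (Finsupp.single α c : List ℕ+ →₀ ℤ) = c • Finsupp.single α 1 := by simp
          conv_rhs => rw [oshMul_single_single β γ d e]
          rw [oshMul_smul_right (d*e)]
          conv_rhs => rw [h2, oshMul_smul_left]
          conv_lhs => rw [oshMul_single_single α β c d, oshMul_smul_left, h1, oshMul_smul_right,
            key (α.length + β.length + γ.length) α β γ le_rfl]
          rw [smul_smul, smul_smul]
          congr 1
          ring
  · intro x
    exact ⟨oshMul_unit_left x, oshMul_unit_right x⟩
end

section
/- In NSymm, the antipode ι satisfies, for every composition α, ι(Z_α) = Σ_{β refines α^t} (-1)^{length(β)} Z_β, where α^t is the reverse of α and β refines α means there are indices 1 ≤ j_1 < j_2 < ... < j_m = length(β) with a_i = b_{j_{i-1}+1} + ... + b_{j_i} (j_0 = 0). -/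
/-- `NSymm = ℤ⟨Z₁, Z₂, …⟩`, the generator indexed by `n` representing `Z_{n+1}`. -/
abbrev NSymm : Type := FreeAlgebra ℤ ℕ

/-- The generators `Z_n`, with `Z 0 = 1`. -/
noncomputable def Z : ℕ → NSymm
  | 0 => 1
  | n + 1 => FreeAlgebra.ι ℤ n

/-- `b` refines `a` (as lists of block sizes): `b` can be split into consecutive
groups whose sums are the entries of `a`. -/
def Refines (b a : List ℕ) : Prop :=
  ∃ γ : List (List ℕ), γ.flatten = b ∧ γ.map List.sum = a

lemma list_pos_sum_zero {l : List ℕ} (h : ∀ x ∈ l, 0 < x) (hs : l.sum = 0) : l = [] := by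
  cases l with
  | nil => rfl
  | cons a t =>
    simp only [List.sum_cons] at hs
    have := h a (by simp)
    omega

lemma append_split_unique : ∀ (p₁ q₁ p₂ q₂ : List ℕ),
    (∀ x ∈ p₁, 0 < x) → (∀ x ∈ p₂, 0 < x) →
    p₁ ++ q₁ = p₂ ++ q₂ → p₁.sum = p₂.sum → p₁ = p₂ ∧ q₁ = q₂ := by
  intro p₁
  induction p₁ with
  | nil =>
    intro q₁ p₂ q₂ h1 h2 he hs
    have : p₂ = [] := list_pos_sum_zero h2 (by simpa using hs.symm)
    subst this
    simpa using he
  | cons a t ih =>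
    intro q₁ p₂ q₂ h1 h2 he hs
    cases p₂ with
    | nil =>
      have ha := h1 a (by simp)
      simp only [List.sum_cons, List.sum_nil] at hs
      omega
    | cons b t₂ =>
      simp only [List.cons_append, List.cons.injEq] at he
      obtain ⟨rfl, he⟩ := he
      simp only [List.sum_cons, Nat.add_right_cancel_iff] at hs
      obtain ⟨h3, h4⟩ := ih q₁ t₂ q₂ (fun x hx => h1 x (List.mem_cons_of_mem _ hx))
        (fun x hx => h2 x (List.mem_cons_of_mem _ hx)) he (by omega)
      exact ⟨by rw [h3], h4⟩

lemma Refines.sum_eq {b a : List ℕ} (h : Refines b a) : b.sum = a.sum := by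
  obtain ⟨γ, hf, hm⟩ := h
  rw [← hf, ← hm, List.sum_flatten]

lemma Refines.append {b c u v : List ℕ} (hb : Refines b u) (hc : Refines c v) :
    Refines (b ++ c) (u ++ v) := by
  obtain ⟨γ₁, hf1, hm1⟩ := hb
  obtain ⟨γ₂, hf2, hm2⟩ := hc
  exact ⟨γ₁ ++ γ₂, by simp [hf1, hf2], by simp [hm1, hm2]⟩

lemma Refines.of_append {d u v : List ℕ} (h : Refines d (u ++ v)) :
    ∃ b c, d = b ++ c ∧ Refines b u ∧ Refines c v := by
  obtain ⟨γ, hf, hm⟩ := h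
  rw [List.map_eq_append_iff] at hm
  obtain ⟨γ₁, γ₂, rfl, hm1, hm2⟩ := hm
  exact ⟨γ₁.flatten, γ₂.flatten, by simp [← hf], ⟨γ₁, rfl, hm1⟩, ⟨γ₂, rfl, hm2⟩⟩

lemma refines_single {b : List ℕ} {a : ℕ} (h : b.sum = a) : Refines b [a] :=
  ⟨[b], by simp, by simp [h]⟩

lemma refines_nil : Refines [] [] := ⟨[], rfl, rfl⟩

/-- Concatenation of compositions. -/
def joinComp {n₁ n₂ n : ℕ} (h : n₁ + n₂ = n) (β : Composition n₁) (γ : Composition n₂) :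
    Composition n :=
  ⟨β.blocks ++ γ.blocks,
   fun hx => (List.mem_append.1 hx).elim (β.blocks_pos) (γ.blocks_pos),
   by rw [List.sum_append, β.blocks_sum, γ.blocks_sum, h]⟩

open scoped Classical in
/-- In `NSymm`, the antipode `ι` (the ring anti-endomorphism with
`ι(Z_n) = ∑_{wt(α)=n} (-1)^{length(α)} Z_α`) satisfies, for every composition `α`,
`ι(Z_α) = ∑_{β refines αᵗ} (-1)^{length(β)} Z_β`, where `αᵗ` is the reverse of `α`. -/
theorem nsymm_antipode_on_Z_alpha
    (ι : NSymm →ₗ[ℤ] NSymm)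
    (hι1 : ι 1 = 1)
    (hιmul : ∀ x y : NSymm, ι (x * y) = ι y * ι x)
    (hιZ : ∀ n : ℕ, ι (Z (n + 1)) =
      ∑ α : Composition (n + 1), ((-1 : ℤ) ^ α.length) • (α.blocks.map Z).prod) :
    ∀ (n : ℕ) (α : Composition n),
      ι ((α.blocks.map Z).prod)
        = ∑ β ∈ Finset.univ.filter
            (fun β : Composition n => Refines β.blocks α.blocks.reverse),
            ((-1 : ℤ) ^ β.length) • (β.blocks.map Z).prod := by
  suffices H : ∀ (l : List ℕ) (n : ℕ) (α : Composition n), α.blocks = l →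
      ι ((α.blocks.map Z).prod)
        = ∑ β ∈ Finset.univ.filter
            (fun β : Composition n => Refines β.blocks α.blocks.reverse),
            ((-1 : ℤ) ^ β.length) • (β.blocks.map Z).prod by
    exact fun n α => H α.blocks n α rfl
  intro l
  induction l with
  | nil =>
    intro n α hb
    have hn : n = 0 := by
      have := α.blocks_sum
      rw [hb] at this
      simpa using this.symm
    subst hn
    rw [hb]
    simp only [List.map_nil, List.prod_nil, hι1, List.reverse_nil]
    have huniq : ∀ β : Composition 0, β.blocks = [] := fun β =>
      list_pos_sum_zero (fun x hx => β.blocks_pos hx) β.blocks_sum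
    have c0 : Composition 0 := ⟨[], by simp, by simp⟩
    have hfil : (Finset.univ.filter
        (fun β : Composition 0 => Refines β.blocks [])) = {⟨[], by simp, by simp⟩} := by
      ext β
      simp only [Finset.mem_filter, Finset.mem_univ, true_and, Finset.mem_singleton]
      constructor
      · intro _; exact Composition.ext (huniq β)
      · intro h; rw [huniq β]; exact refines_nil
    rw [show @Finset.filter (Composition 0) (fun β => Refines β.blocks [])
        (fun a => Classical.propDecidable (Refines a.blocks ([] : List ℕ).reverse)) Finset.univ = _
        from hfil, Finset.sum_singleton]
    simp [Composition.length]
  | cons a rest ih =>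
    intro n α hb
    have ha : 0 < a := α.blocks_pos (by rw [hb]; exact List.mem_cons_self)
    have hrpos : ∀ x ∈ rest, 0 < x := fun x hx =>
      α.blocks_pos (by rw [hb]; exact List.mem_cons_of_mem _ hx)
    set n' := rest.sum with hn'
    have hn : n = a + n' := by
      have := α.blocks_sum
      rw [hb] at this
      simpa using this.symm
    obtain ⟨m, rfl⟩ : ∃ m, a = m + 1 := ⟨a - 1, by omega⟩
    have α' : Composition n' := ⟨rest, fun hx => hrpos _ hx, rfl⟩
    rw [hb]
    simp only [List.map_cons, List.prod_cons, List.reverse_cons]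
    rw [hιmul, ih n' ⟨rest, fun hx => hrpos _ hx, rfl⟩ rfl, hιZ m]
    rw [Finset.sum_mul_sum, ← Finset.sum_product']
    refine Finset.sum_bij (fun p _ => joinComp (by omega : n' + (m + 1) = n) p.1 p.2)
      ?_ ?_ ?_ ?_
    · rintro ⟨β, γ⟩ hp
      rw [Finset.mem_product, Finset.mem_filter] at hp
      rw [Finset.mem_filter]
      refine ⟨Finset.mem_univ _, ?_⟩
      exact Refines.append hp.1.2 (refines_single γ.blocks_sum)
    · rintro ⟨β₁, γ₁⟩ h₁ ⟨β₂, γ₂⟩ h₂ heq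
      have hblocks : β₁.blocks ++ γ₁.blocks = β₂.blocks ++ γ₂.blocks :=
        congrArg Composition.blocks heq
      obtain ⟨e1, e2⟩ := append_split_unique _ _ _ _
        (fun x hx => β₁.blocks_pos hx) (fun x hx => β₂.blocks_pos hx)
        hblocks (by rw [β₁.blocks_sum, β₂.blocks_sum])
      exact Prod.ext (Composition.ext e1) (Composition.ext e2)
    · intro δ hδ
      rw [Finset.mem_filter] at hδ
      obtain ⟨b, c, hbc, hru, hrv⟩ := Refines.of_append hδ.2
      have hbpos : ∀ x ∈ b, 0 < x := fun x hx =>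
        δ.blocks_pos (by rw [hbc]; exact List.mem_append_left _ hx)
      have hcpos : ∀ x ∈ c, 0 < x := fun x hx =>
        δ.blocks_pos (by rw [hbc]; exact List.mem_append_right _ hx)
      have hbsum : b.sum = n' := by
        have := hru.sum_eq
        rwa [List.sum_reverse] at this
      have hcsum : c.sum = m + 1 := by simpa using hrv.sum_eq
      refine ⟨⟨⟨b, fun hx => hbpos _ hx, hbsum⟩, ⟨c, fun hx => hcpos _ hx, hcsum⟩⟩, ?_, ?_⟩
      · rw [Finset.mem_product, Finset.mem_filter]
        exact ⟨⟨Finset.mem_univ _, hru⟩, Finset.mem_univ _⟩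
      · exact (Composition.ext hbc.symm)
    · rintro ⟨β, γ⟩ hp
      show ((-1 : ℤ) ^ β.length • _) * ((-1 : ℤ) ^ γ.length • _) = _
      rw [smul_mul_assoc, mul_smul_comm, smul_smul, ← pow_add]
      congr 1
      · simp [Composition.length, joinComp]
      · simp [joinComp]
end

section
/- The standardization-cut coproduct μ_MPR(σ) = Σ_{α*β=σ} st(α) ⊗ st(β) on MPR = ⊕_n Z S_n is coassociative, where the sum is over all ways to write the word of σ as a concatenation α*β, and st(γ) is the unique permutation word with the same relative order of letters as γ. -/
open TensorProduct

/-- The standardization of a word with distinct letters: the unique permutation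
word with the same relative order of letters (`b_i = 1 + #{j : a_j < a_i}`). -/
def stdz (α : List ℕ) : List ℕ :=
  α.map fun a => 1 + (α.filter fun b => b < a).length

lemma countP_lt (l : List ℕ) {a b : ℕ} (hb : b ∈ l) (h : b < a) :
    (l.filter fun x => x < b).length < (l.filter fun x => x < a).length := by
  simp only [← List.countP_eq_length_filter] at *
  induction l with
  | nil => simp at hb
  | cons c t ih =>
    rcases List.mem_cons.1 hb with rfl | hb
    · have : t.countP (fun x => decide (x < b)) ≤ t.countP (fun x => decide (x < a)) :=
        List.countP_mono_left (fun x _ hx => by simp at hx ⊢; omega)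
      simp only [List.countP_cons]
      simp [h, lt_irrefl]
      omega
    · have := ih hb
      simp only [List.countP_cons]
      by_cases hc : c < b
      · simp [hc, hc.trans h]; omega
      · by_cases hc' : c < a <;> simp [hc, hc'] <;> omega

lemma stdz_iff (w : List ℕ) {a b : ℕ} (ha : a ∈ w) (hb : b ∈ w) :
    (b < a ↔ 1 + (w.filter fun x => x < b).length < 1 + (w.filter fun x => x < a).length) := by
  constructor
  · intro h; have := countP_lt w hb h; omega
  · intro h
    rcases lt_trichotomy b a with h' | rfl | h'
    · exact h'
    · omega
    · have := countP_lt w ha h'; omega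

lemma stdz_map (l : List ℕ) (f : ℕ → ℕ) (hf : ∀ a ∈ l, ∀ b ∈ l, (b < a ↔ f b < f a)) :
    stdz (l.map f) = stdz l := by
  unfold stdz
  rw [List.map_map]
  apply List.map_congr_left
  intro a ha
  simp only [Function.comp_apply]
  congr 1
  rw [List.filter_map, List.length_map]
  congr 1
  apply List.filter_congr
  intro b hb
  simp only [Function.comp_apply, decide_eq_decide]
  exact (hf a ha b hb).symm

lemma length_stdz (w : List ℕ) : (stdz w).length = w.length := List.length_map ..

lemma stdz_take (w : List ℕ) (i : ℕ) : stdz ((stdz w).take i) = stdz (w.take i) := by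
  show stdz (((w.map _)).take i) = _
  rw [← List.map_take]
  exact stdz_map _ _ fun a ha b hb =>
    stdz_iff w (List.mem_of_mem_take ha) (List.mem_of_mem_take hb)

lemma stdz_drop (w : List ℕ) (i : ℕ) : stdz ((stdz w).drop i) = stdz (w.drop i) := by
  show stdz (((w.map _)).drop i) = _
  rw [← List.map_drop]
  exact stdz_map _ _ fun a ha b hb =>
    stdz_iff w (List.mem_of_mem_drop ha) (List.mem_of_mem_drop hb)

/-- The standardization-cut coproduct on a basis word:
`μ(σ) = ∑_{α*β=σ} st(α) ⊗ st(β)`, the sum over all ways of cutting `σ`. -/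
noncomputable def cutStdB (σ : List ℕ) :
    (List ℕ →₀ ℤ) ⊗[ℤ] (List ℕ →₀ ℤ) :=
  ∑ i ∈ Finset.range (σ.length + 1),
    Finsupp.single (stdz (σ.take i)) (1 : ℤ) ⊗ₜ[ℤ] Finsupp.single (stdz (σ.drop i)) (1 : ℤ)

/-- Its `ℤ`-linear extension `μ_MPR`. -/
noncomputable def cutStd : (List ℕ →₀ ℤ) →ₗ[ℤ] (List ℕ →₀ ℤ) ⊗[ℤ] (List ℕ →₀ ℤ) :=
  Finsupp.lsum ℤ fun σ => LinearMap.toSpanSingleton ℤ _ (cutStdB σ)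

lemma cutStd_single (τ : List ℕ) : cutStd (Finsupp.single τ 1) = cutStdB τ := by
  simp [cutStd, Finsupp.lsum_single, LinearMap.toSpanSingleton_apply]

lemma cutStdB_stdz (w : List ℕ) :
    cutStdB (stdz w) = ∑ i ∈ Finset.range (w.length + 1),
      Finsupp.single (stdz (w.take i)) (1 : ℤ) ⊗ₜ[ℤ] Finsupp.single (stdz (w.drop i)) (1 : ℤ) := by
  unfold cutStdB
  rw [length_stdz]
  exact Finset.sum_congr rfl fun i _ => by rw [stdz_take, stdz_drop]

set_option maxHeartbeats 1000000 in
set_option synthInstance.maxHeartbeats 200000 in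
/-- The standardization-cut coproduct `μ_MPR` on `MPR = ⊕ₙ ℤSₙ` is coassociative
(permutations in `Sₙ` are identified with words that are permutations of `[1,…,n]`;
it suffices to check coassociativity on these basis elements). -/
theorem mpr_coproduct_coassoc :
    ∀ (n : ℕ) (σ : List ℕ), σ.Perm (List.range' 1 n) →
      (TensorProduct.assoc ℤ _ _ _)
          ((TensorProduct.map cutStd LinearMap.id) (cutStd (Finsupp.single σ 1)))
        = (TensorProduct.map LinearMap.id cutStd) (cutStd (Finsupp.single σ 1)) := by
  intro n σ _
  rw [cutStd_single]
  unfold cutStdB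
  rw [map_sum, map_sum]
  erw [map_sum]
  simp only [TensorProduct.map_tmul, LinearMap.id_apply, cutStd_single, cutStdB_stdz,
    TensorProduct.sum_tmul, TensorProduct.tmul_sum, map_sum, TensorProduct.assoc_tmul]
  erw [Finset.sum_congr rfl fun x _ => map_sum (TensorProduct.assoc ℤ (List ℕ →₀ ℤ) (List ℕ →₀ ℤ) (List ℕ →₀ ℤ)) _ _]
  erw [Finset.sum_congr rfl fun x _ => Finset.sum_congr rfl fun y _ => TensorProduct.assoc_tmul (R := ℤ) _ _ _]
  rw [Finset.sum_sigma', Finset.sum_sigma']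
  refine Finset.sum_nbij' (fun p => ⟨p.2, p.1 - p.2⟩) (fun p => ⟨p.1 + p.2, p.1⟩) ?_ ?_ ?_ ?_ ?_
  · rintro ⟨j, i⟩ hm
    simp only [Finset.mem_sigma, Finset.mem_range, List.length_take, List.length_drop] at hm ⊢
    omega
  · rintro ⟨i, k⟩ hm
    simp only [Finset.mem_sigma, Finset.mem_range, List.length_take, List.length_drop] at hm ⊢
    omega
  · rintro ⟨j, i⟩ hm
    simp only [Finset.mem_sigma, Finset.mem_range] at hm
    have h2 := List.length_take_le j σ
    simp only [Sigma.mk.inj_iff, heq_eq_eq]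
    refine ⟨by omega, by trivial⟩
  · rintro ⟨i, k⟩ hm
    simp only [Sigma.mk.inj_iff, heq_eq_eq]
    refine ⟨trivial, by omega⟩
  · rintro ⟨j, i⟩ hm
    simp only [Finset.mem_sigma, Finset.mem_range] at hm
    have h2 := List.length_take_le j σ
    have hij : i ≤ j := by omega
    have e1 : (σ.take j).take i = σ.take i := by rw [List.take_take, min_eq_left hij]
    have e2 : (σ.take j).drop i = (σ.drop i).take (j - i) := List.drop_take ..
    have e3 : (σ.drop i).drop (j - i) = σ.drop j := by rw [List.drop_drop]; congr 1; omega
    rw [e1, e2, ← e3]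
    rfl
end
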